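/- With the setup of the doubly robust moment ψ(Z; α, g) = m(Z; g) + α(W)(Y − g(W)) where g₀(W) = E[Y|W] and α₀ is the Riesz representer of g ↦ E[m(Z; g)], the bias is bounded by the product of L² errors: |E[ψ(Z; α̂, ĝ)] − E[m(Z; g₀)]| ≤ ‖ĝ − g₀‖_{L²} · ‖α̂ − α₀‖_{L²}. -/

import Mathlib

open MeasureTheory
open scoped RealInnerProductSpace

private lemma int_mul_of_memL2 {Ω : Type*} {m0 : MeasurableSpace Ω} {μ : Measure Ω}
    {f g : Ω → ℝ} (hf : MemLp f 2 μ) (hg : MemLp g 2 μ) :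
    Integrable (fun ω => f ω * g ω) μ := by
  have h := L2.integrable_inner (𝕜 := ℝ) (hf.toLp f) (hg.toLp g)
  refine h.congr ?_
  filter_upwards [hf.coeFn_toLp, hg.coeFn_toLp] with ω h1 h2
  simp [h1, h2, RCLike.inner_apply, mul_comm]

private lemma cs_memL2 {Ω : Type*} {m0 : MeasurableSpace Ω} {μ : Measure Ω}
    {f g : Ω → ℝ} (hf : MemLp f 2 μ) (hg : MemLp g 2 μ) :
    |∫ ω, f ω * g ω ∂μ| ≤
      Real.sqrt (∫ ω, f ω ^ 2 ∂μ) * Real.sqrt (∫ ω, g ω ^ 2 ∂μ) := by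
  set F := hf.toLp f with hF
  set G := hg.toLp g with hG
  have hFG : ⟪F, G⟫ = ∫ ω, f ω * g ω ∂μ := by
    rw [L2.inner_def]
    refine integral_congr_ae ?_
    filter_upwards [hf.coeFn_toLp, hg.coeFn_toLp] with ω h1 h2
    simp [hF, hG, h1, h2, RCLike.inner_apply, mul_comm]
  have hFn : ‖F‖ = Real.sqrt (∫ ω, f ω ^ 2 ∂μ) := by
    have h1 : ⟪F, F⟫ = ∫ ω, f ω ^ 2 ∂μ := by
      rw [L2.inner_def]
      refine integral_congr_ae ?_
      filter_upwards [hf.coeFn_toLp] with ω h1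
      simp [hF, h1, RCLike.inner_apply, sq]
    rw [← h1, real_inner_self_eq_norm_sq, Real.sqrt_sq (norm_nonneg _)]
  have hGn : ‖G‖ = Real.sqrt (∫ ω, g ω ^ 2 ∂μ) := by
    have h1 : ⟪G, G⟫ = ∫ ω, g ω ^ 2 ∂μ := by
      rw [L2.inner_def]
      refine integral_congr_ae ?_
      filter_upwards [hg.coeFn_toLp] with ω h1
      simp [hG, h1, RCLike.inner_apply, sq]
    rw [← h1, real_inner_self_eq_norm_sq, Real.sqrt_sq (norm_nonneg _)]
  calc |∫ ω, f ω * g ω ∂μ| = |⟪F, G⟫| := by rw [hFG]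
    _ ≤ ‖F‖ * ‖G‖ := abs_real_inner_le_norm F G
    _ = _ := by rw [hFn, hGn]

/-- Bias bound for the doubly robust moment: with `g₀ = E[Y|W]` and Riesz
representer `α₀` of the linear moment functional `M g = E[m(Z;g)]`,
`|E[ψ(Z;αhat,ghat)] − E[m(Z;g₀)]| ≤ ‖ghat − g₀‖_{L²} · ‖αhat − α₀‖_{L²}`. -/
theorem doubly_robust_bias_bound
    {Ω : Type*} {m0 : MeasurableSpace Ω} {μ : Measure Ω} [IsProbabilityMeasure μ]
    (𝔪 : MeasurableSpace Ω) (h𝔪 : 𝔪 ≤ m0)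
    (Y : Ω → ℝ) (hY : MemLp Y 2 μ)
    (M : (Ω → ℝ) → ℝ) (α₀ ghat αhat : Ω → ℝ)
    (hα₀ : MemLp α₀ 2 μ) (hghat : MemLp ghat 2 μ) (hαhat : MemLp αhat 2 μ)
    (hα₀m : StronglyMeasurable[𝔪] α₀)
    (hghatm : StronglyMeasurable[𝔪] ghat)
    (hαhatm : StronglyMeasurable[𝔪] αhat)
    (hRiesz : ∀ g : Ω → ℝ, MemLp g 2 μ → StronglyMeasurable[𝔪] g →
      M g = ∫ ω, α₀ ω * g ω ∂μ) :
    |(M ghat + ∫ ω, αhat ω * (Y ω - ghat ω) ∂μ) - M (μ[Y | 𝔪])| ≤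
      Real.sqrt (∫ ω, (ghat ω - (μ[Y | 𝔪]) ω) ^ 2 ∂μ) *
        Real.sqrt (∫ ω, (αhat ω - α₀ ω) ^ 2 ∂μ) := by
  haveI : SigmaFinite (μ.trim h𝔪) := by infer_instance
  set g₀ : Ω → ℝ := μ[Y | 𝔪] with hg₀def
  have hYint : Integrable Y μ := hY.integrable one_le_two
  have hc : g₀ =ᵐ[μ] ((condExpL2 ℝ ℝ h𝔪 (hY.toLp Y) : Lp ℝ 2 μ) : Ω → ℝ) := by
    symm
    refine ae_eq_condExp_of_forall_setIntegral_eq h𝔪 hYint ?_ ?_ ?_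
    · intro s hs hμs
      exact integrableOn_condExpL2_of_measure_ne_top h𝔪 hμs.ne _
    · intro s hs hμs
      rw [integral_condExpL2_eq h𝔪 (hY.toLp Y) hs hμs.ne]
      exact integral_congr_ae (ae_restrict_of_ae hY.coeFn_toLp)
    · exact aestronglyMeasurable_condExpL2 h𝔪 _
  have hg₀ : MemLp g₀ 2 μ := (Lp.memLp _).ae_eq hc.symm
  have hg₀m : StronglyMeasurable[𝔪] g₀ := stronglyMeasurable_condExp
  have hg₀int : Integrable g₀ μ := integrable_condExp
  have hI1 : Integrable (fun ω => α₀ ω * ghat ω) μ := int_mul_of_memL2 hα₀ hghat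
  have hI2 : Integrable (fun ω => α₀ ω * g₀ ω) μ := int_mul_of_memL2 hα₀ hg₀
  have hI3 : Integrable (fun ω => αhat ω * Y ω) μ := int_mul_of_memL2 hαhat hY
  have hI4 : Integrable (fun ω => αhat ω * ghat ω) μ := int_mul_of_memL2 hαhat hghat
  have hI5 : Integrable (fun ω => αhat ω * g₀ ω) μ := int_mul_of_memL2 hαhat hg₀
  have horth : ∫ ω, αhat ω * Y ω ∂μ = ∫ ω, αhat ω * g₀ ω ∂μ := by
    have hce : μ[αhat * Y | 𝔪] =ᵐ[μ] αhat * μ[Y | 𝔪] :=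
      condExp_mul_of_stronglyMeasurable_left hαhatm hI3 hYint
    calc ∫ ω, αhat ω * Y ω ∂μ = ∫ ω, (μ[αhat * Y | 𝔪]) ω ∂μ :=
          (integral_condExp h𝔪).symm
      _ = ∫ ω, (αhat * g₀) ω ∂μ := integral_congr_ae hce
      _ = ∫ ω, αhat ω * g₀ ω ∂μ := rfl
  have hsplit : ∫ ω, αhat ω * (Y ω - ghat ω) ∂μ =
      (∫ ω, αhat ω * Y ω ∂μ) - ∫ ω, αhat ω * ghat ω ∂μ := by
    simp_rw [mul_sub]
    exact integral_sub hI3 hI4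
  have hexp : ∫ ω, (ghat ω - g₀ ω) * (α₀ ω - αhat ω) ∂μ
      = ((∫ ω, α₀ ω * ghat ω ∂μ) - ∫ ω, αhat ω * ghat ω ∂μ)
        - ((∫ ω, α₀ ω * g₀ ω ∂μ) - ∫ ω, αhat ω * g₀ ω ∂μ) := by
    have hfun : (fun ω => (ghat ω - g₀ ω) * (α₀ ω - αhat ω)) =
        fun ω => (α₀ ω * ghat ω - αhat ω * ghat ω) - (α₀ ω * g₀ ω - αhat ω * g₀ ω) := by
      funext ω; ring
    have hIa : Integrable (fun ω => α₀ ω * ghat ω - αhat ω * ghat ω) μ := hI1.sub hI4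
    have hIb : Integrable (fun ω => α₀ ω * g₀ ω - αhat ω * g₀ ω) μ := hI2.sub hI5
    rw [hfun, integral_sub hIa hIb, integral_sub hI1 hI4, integral_sub hI2 hI5]
  have hkey : (M ghat + ∫ ω, αhat ω * (Y ω - ghat ω) ∂μ) - M g₀ =
      ∫ ω, (ghat ω - g₀ ω) * (α₀ ω - αhat ω) ∂μ := by
    rw [hRiesz ghat hghat hghatm, hRiesz g₀ hg₀ hg₀m, hsplit, hexp, horth]
    ring
  rw [hkey]
  have hcs := cs_memL2 (hghat.sub hg₀) (hα₀.sub hαhat)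
  have hsq : ∫ ω, (α₀ ω - αhat ω) ^ 2 ∂μ = ∫ ω, (αhat ω - α₀ ω) ^ 2 ∂μ := by
    refine integral_congr_ae (Filter.Eventually.of_forall fun ω => ?_)
    ring
  simpa [hsq] using hcs
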